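/- arXiv:1803.06710 — 2 statements merged into one kernel-verified Lean document; each statement's English description precedes it below -/
import Mathlib

section
/- The number of labeled graphs on vertex set {1,...,n} whose vertex set can be partitioned into four cliques, each of size between (n−3)/4 and (n+3)/4, is at least 2^{(3/4)·C(n,2) − 3n}. -/
private lemma cnt_mod (n r : ℕ) (hr : r < 4) :
    ((Finset.range n).filter (fun k => k % 4 = r)).card = (n + 3 - r) / 4 := by
  induction n with
  | zero => simp; omega
  | succ n ih =>
    rw [Finset.range_add_one, Finset.filter_insert]
    split <;> simp [Finset.card_insert_of_notMem, ih] <;> omega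

private lemma card_fin_filter (n : ℕ) (q : ℕ → Prop) [DecidablePred q] :
    ((Finset.univ : Finset (Fin n)).filter (fun v => q v.val)).card
      = ((Finset.range n).filter q).card := by
  apply Finset.card_bij (fun v _ => v.val)
  · intro a ha; simp_all
  · intro a _ b _ h; exact Fin.val_injective h
  · intro b hb; simp at hb; exact ⟨⟨b, hb.1⟩, by simp [hb.2], rfl⟩

private lemma fiber_card (n : ℕ) (v : Fin n) (q : ℕ → ℕ → Prop)
    [∀ a b, Decidable (q a b)] :
    ((Finset.univ : Finset (Fin n × Fin n)).filter
        (fun p => (p.1 < p.2 ∧ q p.1.val p.2.val) ∧ p.2 = v)).card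
      = ((Finset.range v.val).filter (fun k => q k v.val)).card := by
  apply Finset.card_bij (fun p _ => p.1.val)
  · intro p hp
    simp only [Finset.mem_filter, Finset.mem_univ, true_and] at hp
    obtain ⟨⟨hlt, hq⟩, hv⟩ := hp
    subst hv
    simp only [Finset.mem_filter, Finset.mem_range]
    exact ⟨hlt, hq⟩
  · intro a ha b hb h
    simp only [Finset.mem_filter, Finset.mem_univ, true_and] at ha hb
    have h1 : a.1 = b.1 := Fin.val_injective h
    have h2 : a.2 = b.2 := ha.2.trans hb.2.symm
    exact Prod.ext h1 h2
  · intro k hk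
    simp only [Finset.mem_filter, Finset.mem_range] at hk
    refine ⟨(⟨k, lt_trans hk.1 v.isLt⟩, v), ?_, rfl⟩
    simp only [Finset.mem_filter, Finset.mem_univ, true_and]
    exact ⟨⟨hk.1, hk.2⟩, trivial⟩

/-- The set of "cross" pairs: ordered pairs in different residue classes mod 4. -/
private abbrev Cross (n : ℕ) :=
  {p : Fin n × Fin n // p.1 < p.2 ∧ p.1.val % 4 ≠ p.2.val % 4}

private def gr (n : ℕ) (f : Cross n → Bool) : SimpleGraph (Fin n) :=
  SimpleGraph.fromRel (fun u v => u.val % 4 = v.val % 4 ∨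
    ∃ h : u < v ∧ u.val % 4 ≠ v.val % 4, f ⟨(u, v), h⟩ = true)

private lemma gr_adj (n : ℕ) (f : Cross n → Bool) (u v : Fin n)
    (h : u < v ∧ u.val % 4 ≠ v.val % 4) :
    (gr n f).Adj u v ↔ f ⟨(u, v), h⟩ = true := by
  simp only [gr, SimpleGraph.fromRel_adj]
  constructor
  · rintro ⟨hne, (hl | ⟨h', hf⟩) | (hl | ⟨h', _⟩)⟩
    · exact absurd hl h.2
    · exact hf
    · exact absurd hl.symm h.2
    · exact absurd h'.1 (asymm h.1)
  · intro hf
    exact ⟨ne_of_lt h.1, Or.inl (Or.inr ⟨h, hf⟩)⟩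

private lemma gr_inj (n : ℕ) : Function.Injective (gr n) := by
  intro f g h
  funext p
  obtain ⟨⟨u, v⟩, hp⟩ := p
  have h1 := gr_adj n f u v hp
  have h2 := gr_adj n g u v hp
  rw [h] at h1
  have := h1.symm.trans h2
  revert this
  cases f ⟨(u, v), hp⟩ <;> cases g ⟨(u, v), hp⟩ <;> simp

private lemma gr_mem (n : ℕ) (f : Cross n → Bool) :
    ∃ Y : Fin 4 → Finset (Fin n),
      (∀ i j, i ≠ j → Disjoint (Y i) (Y j)) ∧ (∀ v, ∃ i, v ∈ Y i) ∧
      ∀ i, (gr n f).IsClique (Y i : Set (Fin n)) ∧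
        ((n : ℝ) - 3) / 4 ≤ ((Y i).card : ℝ) ∧ ((Y i).card : ℝ) ≤ ((n : ℝ) + 3) / 4 := by
  refine ⟨fun i => Finset.univ.filter (fun v => v.val % 4 = i.val), ?_, ?_, ?_⟩
  · intro i j hij
    rw [Finset.disjoint_left]
    intro a ha hb
    simp only [Finset.mem_filter] at ha hb
    exact hij (Fin.val_injective (ha.2.symm.trans hb.2))
  · intro v
    exact ⟨⟨v.val % 4, by omega⟩, by simp⟩
  · intro i
    refine ⟨?_, ?_⟩
    · intro u hu v hv hne
      simp only [Finset.coe_filter, Set.mem_setOf_eq, Finset.mem_univ, true_and] at hu hv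
      exact (SimpleGraph.fromRel_adj _ _ _).mpr ⟨hne, Or.inl (Or.inl (hu.trans hv.symm))⟩
    · have hcard : (Finset.univ.filter (fun v : Fin n => v.val % 4 = i.val)).card
          = (n + 3 - i.val) / 4 := by
        rw [card_fin_filter n (fun k => k % 4 = i.val)]
        exact cnt_mod n i.val i.isLt
      rw [hcard]
      have hi : i.val < 4 := i.isLt
      have hb : n ≤ 4 * ((n + 3 - i.val) / 4) + 3 ∧ 4 * ((n + 3 - i.val) / 4) ≤ n + 3 := by
        omega
      have h1 : (n : ℝ) ≤ 4 * (((n + 3 - i.val) / 4 : ℕ) : ℝ) + 3 := by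
        exact_mod_cast hb.1
      have h2 : 4 * (((n + 3 - i.val) / 4 : ℕ) : ℝ) ≤ (n : ℝ) + 3 := by
        exact_mod_cast hb.2
      constructor
      · rw [div_le_iff₀ (by norm_num : (0:ℝ) < 4)]; linarith
      · rw [le_div_iff₀ (by norm_num : (0:ℝ) < 4)]; linarith

private lemma cross_count (n : ℕ) :
    3 * n.choose 2 ≤ 4 * (Finset.univ.filter
      (fun p : Fin n × Fin n => p.1 < p.2 ∧ p.1.val % 4 ≠ p.2.val % 4)).card := by
  classical
  set P := (Finset.univ : Finset (Fin n × Fin n)).filter (fun p => p.1 < p.2) with hPdef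
  set T := (Finset.univ : Finset (Fin n × Fin n)).filter
    (fun p => p.1 < p.2 ∧ p.1.val % 4 = p.2.val % 4) with hTdef
  set S := (Finset.univ : Finset (Fin n × Fin n)).filter
    (fun p => p.1 < p.2 ∧ p.1.val % 4 ≠ p.2.val % 4) with hSdef
  -- partition
  have hpart : T.card + S.card = P.card := by
    rw [hPdef, hTdef, hSdef]
    rw [show ((Finset.univ : Finset (Fin n × Fin n)).filter
        (fun p => p.1 < p.2 ∧ p.1.val % 4 = p.2.val % 4))
        = P.filter (fun p => p.1.val % 4 = p.2.val % 4) by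
      rw [hPdef, Finset.filter_filter]]
    rw [show ((Finset.univ : Finset (Fin n × Fin n)).filter
        (fun p => p.1 < p.2 ∧ p.1.val % 4 ≠ p.2.val % 4))
        = P.filter (fun p => ¬ p.1.val % 4 = p.2.val % 4) by
      rw [hPdef, Finset.filter_filter]]
    exact Finset.card_filter_add_card_filter_not _
  -- P fiberwise
  have hPfib : P.card = ∑ v : Fin n, v.val := by
    rw [hPdef, Finset.card_eq_sum_card_fiberwise
      (f := Prod.snd) (t := Finset.univ) (fun x _ => Finset.mem_univ _)]
    apply Finset.sum_congr rfl
    intro v _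
    rw [Finset.filter_filter]
    have : ((Finset.univ : Finset (Fin n × Fin n)).filter
        (fun p => p.1 < p.2 ∧ p.2 = v))
        = ((Finset.univ : Finset (Fin n × Fin n)).filter
        (fun p => (p.1 < p.2 ∧ True) ∧ p.2 = v)) := by
      simp
    rw [this, fiber_card n v (fun _ _ => True)]
    simp
  -- T fiberwise
  have hTfib : T.card = ∑ v : Fin n, v.val / 4 := by
    rw [hTdef, Finset.card_eq_sum_card_fiberwise
      (f := Prod.snd) (t := Finset.univ) (fun x _ => Finset.mem_univ _)]
    apply Finset.sum_congr rfl
    intro v _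
    rw [Finset.filter_filter,
      fiber_card n v (fun a b => a % 4 = b % 4),
      cnt_mod v.val (v.val % 4) (by omega)]
    omega
  have hT8 : 8 * T.card ≤ 2 * P.card := by
    rw [hTfib, hPfib, Finset.mul_sum, Finset.mul_sum]
    exact Finset.sum_le_sum (fun v _ => by omega)
  have hPval : 2 * P.card = n * (n - 1) := by
    rw [hPfib, Fin.sum_univ_eq_sum_range (fun i => i) n]
    have := Finset.sum_range_id_mul_two n
    omega
  have hch : n.choose 2 = n * (n - 1) / 2 := Nat.choose_two_right n
  omega

/-- The number of labeled graphs on `Fin n` whose vertex set can be partitioned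
into four cliques, each of size between `(n-3)/4` and `(n+3)/4`, is at least
`2 ^ ((3/4)·C(n,2) - 3n)`. -/
theorem stmt3 (n : ℕ) :
    (2 : ℝ) ^ ((3 / 4 : ℝ) * n.choose 2 - 3 * n) ≤
      Nat.card {G : SimpleGraph (Fin n) // ∃ Y : Fin 4 → Finset (Fin n),
        (∀ i j, i ≠ j → Disjoint (Y i) (Y j)) ∧ (∀ v, ∃ i, v ∈ Y i) ∧
        ∀ i, G.IsClique (Y i : Set (Fin n)) ∧
          ((n : ℝ) - 3) / 4 ≤ ((Y i).card : ℝ) ∧ ((Y i).card : ℝ) ≤ ((n : ℝ) + 3) / 4} := by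
  classical
  set m := (Finset.univ.filter
    (fun p : Fin n × Fin n => p.1 < p.2 ∧ p.1.val % 4 ≠ p.2.val % 4)).card with hm
  -- injection into the target set
  have hinj : Function.Injective (fun f : Cross n → Bool =>
      (⟨gr n f, gr_mem n f⟩ : {G : SimpleGraph (Fin n) // ∃ Y : Fin 4 → Finset (Fin n),
        (∀ i j, i ≠ j → Disjoint (Y i) (Y j)) ∧ (∀ v, ∃ i, v ∈ Y i) ∧
        ∀ i, G.IsClique (Y i : Set (Fin n)) ∧
          ((n : ℝ) - 3) / 4 ≤ ((Y i).card : ℝ) ∧ ((Y i).card : ℝ) ≤ ((n : ℝ) + 3) / 4})) := by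
    intro f g h
    exact gr_inj n (congrArg Subtype.val h)
  have hle := Nat.card_le_card_of_injective _ hinj
  have hdom : Nat.card (Cross n → Bool) = 2 ^ m := by
    rw [Nat.card_eq_fintype_card, Fintype.card_fun, Fintype.card_bool,
      Fintype.card_subtype]
  rw [hdom] at hle
  have hcount := cross_count n
  rw [← hm] at hcount
  -- real arithmetic
  have h1 : (3 / 4 : ℝ) * n.choose 2 - 3 * n ≤ (m : ℝ) := by
    have : (3 : ℝ) * n.choose 2 ≤ 4 * m := by exact_mod_cast hcount
    have hn : (0:ℝ) ≤ 3 * n := by positivity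
    linarith
  calc (2 : ℝ) ^ ((3 / 4 : ℝ) * n.choose 2 - 3 * n)
      ≤ (2 : ℝ) ^ (m : ℝ) := by
        exact Real.rpow_le_rpow_of_exponent_le one_le_two h1
    _ = ((2 ^ m : ℕ) : ℝ) := by
        rw [Real.rpow_natCast]; push_cast; try ring
    _ ≤ _ := by exact_mod_cast hle
end

section
/- Let G be a graph with two great partitions (X₁,...,X₄) and (X′₁,...,X′₄), both satisfying: (a) any two vertices in the same clique-part have at least 13n/32 common neighbors; (b) any two vertices in different parts have fewer than 13n/32 common neighbors; (c) for every part Xᵢ and every vertex v ∉ Xᵢ, there are two vertices of Xᵢ forming an induced path of length 2 with v; (d) X₄ does not induce a clique. Then {X₁,X₂,X₃} = {X′₁,X′₂,X′₃} as sets of parts and X₄ = X′₄. -/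
/-- An ordered partition `X : Fin 4 → Finset (Fin n)` of the vertex set of `G` is *great*
if the first three parts induce cliques and the fourth induces the disjoint union of two
cliques. -/
def IsGreatPartition {n : ℕ} (G : SimpleGraph (Fin n)) (X : Fin 4 → Finset (Fin n)) : Prop :=
  (∀ i j, i ≠ j → Disjoint (X i) (X j)) ∧ (∀ v, ∃ i, v ∈ X i) ∧
  (∀ i : Fin 4, (i : ℕ) < 3 → G.IsClique (X i : Set (Fin n))) ∧
  ∃ C D : Finset (Fin n), X 3 = C ∪ D ∧ Disjoint C D ∧
    G.IsClique (C : Set (Fin n)) ∧ G.IsClique (D : Set (Fin n)) ∧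
    ∀ u ∈ C, ∀ v ∈ D, ¬ G.Adj u v

/-- The three vertices `u, v, w` induce a path (on three vertices) in `G`. -/
def InducesPath {n : ℕ} (G : SimpleGraph (Fin n)) (u v w : Fin n) : Prop :=
  (G.Adj v u ∧ G.Adj v w ∧ ¬ G.Adj u w) ∨
  (G.Adj u v ∧ G.Adj u w ∧ ¬ G.Adj v w) ∨
  (G.Adj w u ∧ G.Adj w v ∧ ¬ G.Adj u v)

/-- The property (P*) of a great partition:
(a) two vertices in the same clique-part have at least `13n/32` common neighbours;
(b) two vertices in different parts have fewer than `13n/32` common neighbours;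
(c) for every part `X i` and every vertex `v ∉ X i`, some two vertices of `X i` form an
induced path with `v`;
(d) the fourth part does not induce a clique. -/
def Pstar {n : ℕ} (G : SimpleGraph (Fin n)) (X : Fin 4 → Finset (Fin n)) : Prop :=
  (∀ i : Fin 4, G.IsClique (X i : Set (Fin n)) →
      ∀ u ∈ X i, ∀ v ∈ X i, u ≠ v →
        (13 * n : ℝ) ≤ 32 * (Nat.card {w : Fin n // G.Adj u w ∧ G.Adj v w} : ℝ)) ∧
  (∀ i j : Fin 4, i ≠ j → ∀ u ∈ X i, ∀ v ∈ X j,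
      (32 * (Nat.card {w : Fin n // G.Adj u w ∧ G.Adj v w} : ℝ)) < 13 * n) ∧
  (∀ i : Fin 4, ∀ v, v ∉ X i →
      ∃ u ∈ X i, ∃ w ∈ X i, u ≠ w ∧ u ≠ v ∧ w ≠ v ∧ InducesPath G u v w) ∧
  ¬ G.IsClique (X 3 : Set (Fin n))

/-- Two vertices of the same clique-part of `X` lie in the same part of `X'`. -/
lemma samePart {n : ℕ} (G : SimpleGraph (Fin n)) (X X' : Fin 4 → Finset (Fin n))
    (hX : IsGreatPartition G X) (hX' : IsGreatPartition G X')
    (hP : Pstar G X) (hP' : Pstar G X')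
    {i : Fin 4} (hi : (i : ℕ) < 3) {u v : Fin n} (hu : u ∈ X i) (hv : v ∈ X i)
    {j k : Fin 4} (hj : u ∈ X' j) (hk : v ∈ X' k) : j = k := by
  rcases eq_or_ne u v with rfl | huv
  · by_contra hne
    exact Finset.disjoint_left.mp (hX'.1 j k hne) hj hk
  · by_contra hne
    have h1 := hP.1 i (hX.2.2.1 i hi) u hu v hv huv
    have h2 := hP'.2.1 j k hne u hj v hk
    linarith

lemma subPart {n : ℕ} (G : SimpleGraph (Fin n)) (X X' : Fin 4 → Finset (Fin n))
    (hX : IsGreatPartition G X) (hX' : IsGreatPartition G X')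
    (hP : Pstar G X) (hP' : Pstar G X')
    {i : Fin 4} (hi : (i : ℕ) < 3) {v : Fin n} (hv : v ∈ X i)
    {j : Fin 4} (hj : v ∈ X' j) : X i ⊆ X' j := by
  intro w hw
  obtain ⟨k, hk⟩ := hX'.2.1 w
  have : k = j := samePart G X X' hX hX' hP hP' hi hw hv hk hj
  exact this ▸ hk

/-- Condition (c) gives a contradiction when a part of `X'` lies in one side of the
split fourth part and the other side is nonempty. -/
lemma pathContra {n : ℕ} (G : SimpleGraph (Fin n)) (X' : Fin 4 → Finset (Fin n))
    (hP' : Pstar G X') (j : Fin 4) {C D : Finset (Fin n)}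
    (hno : ∀ x ∈ C, ∀ y ∈ D, ¬ G.Adj x y) (hdisj : Disjoint C D)
    (hsub : X' j ⊆ C) {u : Fin n} (hu : u ∈ D) : False := by
  have hnotin : u ∉ X' j := fun h => Finset.disjoint_left.mp hdisj (hsub h) hu
  obtain ⟨a, ha, b, hb, -, -, -, hp⟩ := hP'.2.2.1 j u hnotin
  rcases hp with ⟨h1, -, -⟩ | ⟨h1, -, -⟩ | ⟨-, h2, -⟩
  · exact hno a (hsub ha) u hu h1.symm
  · exact hno a (hsub ha) u hu h1
  · exact hno b (hsub hb) u hu h2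

lemma subSide {n : ℕ} (G : SimpleGraph (Fin n)) (Y : Finset (Fin n))
    (hclique : G.IsClique (Y : Set (Fin n))) {C D : Finset (Fin n)}
    (hdisj : Disjoint C D) (hno : ∀ x ∈ C, ∀ y ∈ D, ¬ G.Adj x y)
    (hsub3 : ∀ w ∈ Y, w ∈ C ∪ D) {v : Fin n} (hv : v ∈ Y) (hvC : v ∈ C) :
    Y ⊆ C := by
  intro w hw
  rcases Finset.mem_union.mp (hsub3 w hw) with h | h
  · exact h
  · exfalso
    rcases eq_or_ne w v with rfl | hne
    · exact Finset.disjoint_left.mp hdisj hvC h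
    · exact hno v hvC w h
        (hclique (Finset.mem_coe.mpr hv) (Finset.mem_coe.mpr hw) hne.symm)

lemma threeSub {n : ℕ} (G : SimpleGraph (Fin n)) (X X' : Fin 4 → Finset (Fin n))
    (hX : IsGreatPartition G X) (hX' : IsGreatPartition G X')
    (hP : Pstar G X) (hP' : Pstar G X') : X 3 ⊆ X' 3 := by
  intro v hv3
  obtain ⟨j, hj⟩ := hX'.2.1 v
  rcases Nat.lt_or_ge (j : ℕ) 3 with hjlt | hge
  · exfalso
    have hsub : X' j ⊆ X 3 := subPart G X' X hX' hX hP' hP hjlt hj hv3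
    obtain ⟨C, D, hCD, hdisj, hC, hD, hno⟩ := hX.2.2.2
    -- extract a non-edge from non-cliqueness
    have hw : ¬ ∀ a ∈ X 3, ∀ b ∈ X 3, a ≠ b → G.Adj a b := fun h =>
      hP.2.2.2 (fun a ha b hb hab => h a (Finset.mem_coe.mp ha) b (Finset.mem_coe.mp hb) hab)
    push_neg at hw
    obtain ⟨a, ha, b, hb, hab, hnadj⟩ := hw
    rw [hCD] at ha hb
    have hCDne : C.Nonempty ∧ D.Nonempty := by
      rcases Finset.mem_union.mp ha with haC | haD <;>
        rcases Finset.mem_union.mp hb with hbC | hbD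
      · exact absurd (hC (Finset.mem_coe.mpr haC) (Finset.mem_coe.mpr hbC) hab) hnadj
      · exact ⟨⟨a, haC⟩, ⟨b, hbD⟩⟩
      · exact ⟨⟨b, hbC⟩, ⟨a, haD⟩⟩
      · exact absurd (hD (Finset.mem_coe.mpr haD) (Finset.mem_coe.mpr hbD) hab) hnadj
    have hsub3 : ∀ w ∈ X' j, w ∈ C ∪ D := fun w hw => hCD ▸ hsub hw
    have hclq := hX'.2.2.1 j hjlt
    have hv' : v ∈ C ∪ D := hCD ▸ hv3
    rcases Finset.mem_union.mp hv' with hvC | hvD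
    · obtain ⟨u, huD⟩ := hCDne.2
      exact pathContra G X' hP' j hno hdisj
        (subSide G (X' j) hclq hdisj hno hsub3 hj hvC) huD
    · obtain ⟨u, huC⟩ := hCDne.1
      have hno' : ∀ x ∈ D, ∀ y ∈ C, ¬ G.Adj x y := fun x hx y hy h => hno y hy x hx h.symm
      have hsub3' : ∀ w ∈ X' j, w ∈ D ∪ C := fun w hw => by
        rcases Finset.mem_union.mp (hsub3 w hw) with h | h
        · exact Finset.mem_union_right _ h
        · exact Finset.mem_union_left _ h
      exact pathContra G X' hP' j hno' hdisj.symm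
        (subSide G (X' j) hclq hdisj.symm hno' hsub3' hj hvD) huC
  · have hj3 : j = 3 := Fin.ext (by omega)
    exact hj3 ▸ hj

lemma eqPart {n : ℕ} (G : SimpleGraph (Fin n)) (X X' : Fin 4 → Finset (Fin n))
    (hX : IsGreatPartition G X) (hX' : IsGreatPartition G X')
    (hP : Pstar G X) (hP' : Pstar G X') (h33 : X 3 = X' 3)
    {i : Fin 4} (hi : (i : ℕ) < 3) (hne : (X i).Nonempty) :
    ∃ j : Fin 4, (j : ℕ) < 3 ∧ X i = X' j := by
  obtain ⟨v, hv⟩ := hne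
  obtain ⟨j, hj⟩ := hX'.2.1 v
  have hi3 : i ≠ 3 := by rintro rfl; exact absurd hi (by decide)
  have hj3 : (j : ℕ) < 3 := by
    rcases Nat.lt_or_ge (j : ℕ) 3 with h | h
    · exact h
    · exfalso
      have hjeq : j = 3 := Fin.ext (by omega)
      subst hjeq
      have h3 : v ∈ X 3 := h33 ▸ hj
      exact Finset.disjoint_left.mp (hX.1 i 3 hi3) hv h3
  exact ⟨j, hj3, Finset.Subset.antisymm
    (subPart G X X' hX hX' hP hP' hi hv hj)
    (subPart G X' X hX' hX hP' hP hj3 hj hv)⟩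

lemma inSet {n : ℕ} (G : SimpleGraph (Fin n)) (X X' : Fin 4 → Finset (Fin n))
    (hX : IsGreatPartition G X) (hX' : IsGreatPartition G X')
    (hP : Pstar G X) (hP' : Pstar G X') (h33 : X 3 = X' 3)
    {i : Fin 4} (hi : (i : ℕ) < 3) :
    X i = X' 0 ∨ X i = X' 1 ∨ X i = X' 2 := by
  rcases (X i).eq_empty_or_nonempty with hemp | hne
  · by_contra hcon
    push_neg at hcon
    obtain ⟨hc0, hc1, hc2⟩ := hcon
    have hne' : ∀ j : Fin 4, (j : ℕ) < 3 → (X' j).Nonempty := by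
      intro j hj
      rcases (X' j).eq_empty_or_nonempty with he | h
      · exfalso
        have heq : X i = X' j := by rw [hemp, he]
        have : (j : ℕ) = 0 ∨ (j : ℕ) = 1 ∨ (j : ℕ) = 2 := by omega
        rcases this with h0 | h1 | h2
        · exact hc0 ((Fin.ext h0 : j = 0) ▸ heq)
        · exact hc1 ((Fin.ext h1 : j = 1) ▸ heq)
        · exact hc2 ((Fin.ext h2 : j = 2) ▸ heq)
      · exact h
    obtain ⟨a, ha3, hea⟩ := eqPart G X' X hX' hX hP' hP h33.symm
      (show ((0 : Fin 4) : ℕ) < 3 by decide) (hne' 0 (by decide))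
    obtain ⟨b, hb3, heb⟩ := eqPart G X' X hX' hX hP' hP h33.symm
      (show ((1 : Fin 4) : ℕ) < 3 by decide) (hne' 1 (by decide))
    obtain ⟨c, hc3, hec⟩ := eqPart G X' X hX' hX hP' hP h33.symm
      (show ((2 : Fin 4) : ℕ) < 3 by decide) (hne' 2 (by decide))
    have hdne : ∀ (p q : Fin 4) (x y : Fin 4), p ≠ q → X' p = X x → X' q = X y →
        (X' p).Nonempty → x ≠ y := by
      intro p q x y hpq hx hy hnep h
      subst h
      have := hX'.1 p q hpq
      rw [hx, hy] at this
      have hxe : X x = ∅ := by simpa using disjoint_self.mp this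
      rw [hx, hxe] at hnep
      exact hnep.ne_empty rfl
    have hai : a ≠ i := fun h => (hne' 0 (by decide)).ne_empty (by rw [hea, h, hemp])
    have hbi : b ≠ i := fun h => (hne' 1 (by decide)).ne_empty (by rw [heb, h, hemp])
    have hci : c ≠ i := fun h => (hne' 2 (by decide)).ne_empty (by rw [hec, h, hemp])
    have hab : a ≠ b := hdne 0 1 a b (by decide) hea heb (hne' 0 (by decide))
    have hac : a ≠ c := hdne 0 2 a c (by decide) hea hec (hne' 0 (by decide))
    have hbc : b ≠ c := hdne 1 2 b c (by decide) heb hec (hne' 1 (by decide))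
    have hai' : (a : ℕ) ≠ (i : ℕ) := fun h => hai (Fin.ext h)
    have hbi' : (b : ℕ) ≠ (i : ℕ) := fun h => hbi (Fin.ext h)
    have hci' : (c : ℕ) ≠ (i : ℕ) := fun h => hci (Fin.ext h)
    have hab' : (a : ℕ) ≠ (b : ℕ) := fun h => hab (Fin.ext h)
    have hac' : (a : ℕ) ≠ (c : ℕ) := fun h => hac (Fin.ext h)
    have hbc' : (b : ℕ) ≠ (c : ℕ) := fun h => hbc (Fin.ext h)
    omega
  · obtain ⟨j, hj3, he⟩ := eqPart G X X' hX hX' hP hP' h33 hi hne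
    have : (j : ℕ) = 0 ∨ (j : ℕ) = 1 ∨ (j : ℕ) = 2 := by omega
    rcases this with h0 | h1 | h2
    · exact Or.inl ((Fin.ext h0 : j = 0) ▸ he)
    · exact Or.inr (Or.inl ((Fin.ext h1 : j = 1) ▸ he))
    · exact Or.inr (Or.inr ((Fin.ext h2 : j = 2) ▸ he))

/-- If a graph on `n` vertices has two great partitions both satisfying
(P*)(a)-(d), then they coincide: the sets of the first three parts agree and the fourth
parts are equal. -/
theorem stmt14 {n : ℕ} (G : SimpleGraph (Fin n)) (X X' : Fin 4 → Finset (Fin n))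
    (hX : IsGreatPartition G X) (hX' : IsGreatPartition G X')
    (hP : Pstar G X) (hP' : Pstar G X') :
    ({X 0, X 1, X 2} : Set (Finset (Fin n))) = {X' 0, X' 1, X' 2} ∧ X 3 = X' 3 := by
  have h33 : X 3 = X' 3 :=
    Finset.Subset.antisymm (threeSub G X X' hX hX' hP hP') (threeSub G X' X hX' hX hP' hP)
  refine ⟨?_, h33⟩
  ext S
  simp only [Set.mem_insert_iff, Set.mem_singleton_iff]
  constructor
  · rintro (rfl | rfl | rfl)
    · exact inSet G X X' hX hX' hP hP' h33 (by decide)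
    · exact inSet G X X' hX hX' hP hP' h33 (by decide)
    · exact inSet G X X' hX hX' hP hP' h33 (by decide)
  · rintro (rfl | rfl | rfl)
    · exact inSet G X' X hX' hX hP' hP h33.symm (by decide)
    · exact inSet G X' X hX' hX hP' hP h33.symm (by decide)
    · exact inSet G X' X hX' hX hP' hP h33.symm (by decide)
end
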